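/- For a formal polynomial Q of degree n over the sign semiring B_s (equivalently over the hyperfield of signs), with coefficients in {0, 1, ⊖1}, the Baker–Lorscheid multiplicity of the root 1 equals the number of sign changes in the sequence of nonzero coefficients of Q, and the multiplicity of the root ⊖1 equals the number of sign changes in the coefficients of Q(⊖Y). -/

import Mathlib

set_option linter.unusedVariables false

/-- The symmetrized Boolean semiring `B_s = {0, 𝟙, ⊖𝟙, 𝟙°}`, equivalent to
the hyperfield of signs. -/
inductive Bs : Type
  | zero : Bs
  | one : Bs
  | negOne : Bs
  | bal : Bs
  deriving DecidableEq

namespace Bs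

/-- The negation map `⊖`. -/
def sneg : Bs → Bs
  | zero => zero
  | one => negOne
  | negOne => one
  | bal => bal

/-- Addition of `B_s` (idempotent; `𝟙 ⊕ ⊖𝟙 = 𝟙°`, `𝟙°` absorbing among
nonzero elements). -/
def add : Bs → Bs → Bs
  | zero, x => x
  | x, zero => x
  | bal, _ => bal
  | _, bal => bal
  | one, one => one
  | negOne, negOne => negOne
  | one, negOne => bal
  | negOne, one => bal

/-- Multiplication of `B_s`. -/
def mul : Bs → Bs → Bs
  | zero, _ => zero
  | _, zero => zero
  | one, x => x
  | x, one => x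
  | negOne, negOne => one
  | negOne, bal => bal
  | bal, negOne => bal
  | bal, bal => bal

/-- Balanced elements `{0, 𝟙°}`. -/
def isBalanced : Bs → Prop
  | zero => True
  | bal => True
  | _ => False

/-- Signed elements `B_s^∨ = {0, 𝟙, ⊖𝟙}`. -/
def isSigned : Bs → Prop
  | bal => False
  | _ => True

/-- The balance relation `x ∇ y`. -/
def nabla (x y : Bs) : Prop := isBalanced (add x (sneg y))

/-- Powers in `B_s`. -/
def spow (x : Bs) : ℕ → Bs
  | 0 => one
  | k + 1 => mul x (spow x k)

/-- Sum of a list of elements of `B_s`. -/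
def lsum : List Bs → Bs := List.foldr add zero

/-- The polynomial function `Q̂(y)` of a formal polynomial of degree ≤ `n`. -/
def phat (Q : ℕ → Bs) (n : ℕ) (y : Bs) : Bs :=
  lsum ((List.range (n + 1)).map fun k => mul (Q k) (spow y k))

/-- `a` is a root of the finitely supported formal polynomial `Q`. -/
def IsRoot (Q : ℕ → Bs) (a : Bs) : Prop :=
  ∃ N, (∀ k, N < k → Q k = zero) ∧ nabla (phat Q N a) zero

/-- The coefficientwise balance relation `λ P ∇ (Y ⊖ a) Q`. -/
def balFactor (a lam : Bs) (P Q : ℕ → Bs) : Prop :=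
  (∀ k, 1 ≤ k → nabla (mul lam (P k)) (add (Q (k - 1)) (mul (sneg a) (Q k)))) ∧
  nabla (mul lam (P 0)) (mul (sneg a) (Q 0))

/-- The Baker–Lorscheid multiplicity of `a` as a root of `P` is at least `m`. -/
def MultGe (a : Bs) : ℕ → (ℕ → Bs) → Prop
  | 0, _ => True
  | m + 1, P => IsRoot P a ∧ ∃ (lam : Bs) (Q : ℕ → Bs),
      isSigned lam ∧ lam ≠ zero ∧ (∀ k, isSigned (Q k)) ∧
      (∃ N, ∀ k, N < k → Q k = zero) ∧ balFactor a lam P Q ∧ MultGe a m Q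

/-- The Baker–Lorscheid multiplicity of `a` as a root of `P` equals `m`. -/
def MultEq (a : Bs) (P : ℕ → Bs) (m : ℕ) : Prop :=
  MultGe a m P ∧ ¬ MultGe a (m + 1) P

/-- Number of sign changes in the sequence of nonzero coefficients: indices `i`
such that for some `k ≥ 1`, `Q_i = ⊖ Q_{i+k} ≠ 0` with all intermediate
coefficients zero. -/
noncomputable def signChanges (Q : ℕ → Bs) : ℕ :=
  Set.ncard {i : ℕ | ∃ k, 1 ≤ k ∧ Q i ≠ zero ∧ Q i = sneg (Q (i + k)) ∧
    ∀ j, i < j → j < i + k → Q j = zero}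

end Bs

set_option linter.dupNamespace false
set_option maxHeartbeats 1000000
namespace Bs

instance : DecidablePred isBalanced := fun x =>
  match x with
  | zero => isTrue trivial
  | bal => isTrue trivial
  | one => isFalse (fun h => h)
  | negOne => isFalse (fun h => h)

instance : DecidablePred isSigned := fun x =>
  match x with
  | zero => isTrue trivial
  | bal => isFalse (fun h => h)
  | one => isTrue trivial
  | negOne => isTrue trivial

instance : ∀ x y : Bs, Decidable (nabla x y) := fun x y =>
  inferInstanceAs (Decidable (isBalanced _))

instance : Fintype Bs where
  elems := {zero, one, negOne, bal}
  complete := by intro x; cases x <;> decide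

/-- last nonzero value among `Q 0, ..., Q (m-1)` (or `zero`). -/
def lastS (Q : ℕ → Bs) : ℕ → Bs
  | 0 => zero
  | m+1 => if Q m = zero then lastS Q m else Q m

/-- a "sign change counted at position m": `Q m` nonzero and opposite to the
last previous nonzero value. -/
def incr (Q : ℕ → Bs) (m : ℕ) : Prop := Q m ≠ zero ∧ lastS Q m = sneg (Q m)

instance (Q : ℕ → Bs) : DecidablePred (incr Q) := fun _ =>
  inferInstanceAs (Decidable (_ ∧ _))

/-- number of counted sign changes at positions `< M`. -/
def scP (Q : ℕ → Bs) : ℕ → ℕ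
  | 0 => 0
  | m+1 => scP Q m + (if incr Q m then 1 else 0)

lemma sneg_ne_zero {x : Bs} : sneg x ≠ zero ↔ x ≠ zero := by cases x <;> simp [sneg]

lemma lastS_signed (Q : ℕ → Bs) (h : ∀ k, isSigned (Q k)) (m : ℕ) :
    isSigned (lastS Q m) := by
  induction m with
  | zero => trivial
  | succ m ih => rw [lastS]; split <;> [exact ih; exact h m]

lemma lastS_eq_of (Q : ℕ → Bs) {i j : ℕ} (hij : i < j) (hi : Q i ≠ zero)
    (hz : ∀ l, i < l → l < j → Q l = zero) : lastS Q j = Q i := by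
  induction j with
  | zero => omega
  | succ j ih =>
    rw [lastS]
    rcases Nat.lt_or_ge i j with h | h
    · rw [if_pos (hz j h (by omega))]; exact ih h (fun l h1 h2 => hz l h1 (by omega))
    · have : i = j := by omega
      subst this; rw [if_neg hi]

lemma lastS_spec (Q : ℕ → Bs) {m : ℕ} (h : lastS Q m ≠ zero) :
    ∃ i, i < m ∧ Q i = lastS Q m ∧ ∀ l, i < l → l < m → Q l = zero := by
  induction m with
  | zero => exact absurd rfl h
  | succ m ih =>
    by_cases hq : Q m = zero
    · rw [lastS, if_pos hq] at h ⊢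
      obtain ⟨i, h1, h2, h3⟩ := ih h
      exact ⟨i, by omega, h2, fun l hl1 hl2 => by
        rcases Nat.lt_or_ge l m with h' | h'
        · exact h3 l hl1 h'
        · have : l = m := by omega
          subst this; exact hq⟩
    · rw [lastS, if_neg hq]
      exact ⟨m, by omega, rfl, fun l h1 h2 => by omega⟩

lemma lastS_stable (Q : ℕ → Bs) {m M : ℕ} (hm : m ≤ M)
    (hz : ∀ k, m ≤ k → k < M → Q k = zero) : lastS Q M = lastS Q m := by
  induction M with
  | zero => have : m = 0 := by omega
            subst this; rfl
  | succ M ih =>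
    rcases Nat.lt_or_ge m (M+1) with h | h
    · have hm' : m ≤ M := by omega
      rw [lastS, if_pos (hz M hm' (by omega))]
      exact ih hm' (fun k h1 h2 => hz k h1 (by omega))
    · have : m = M + 1 := by omega
      subst this; rfl

lemma scP_eq_card (Q : ℕ → Bs) (M : ℕ) :
    scP Q M = ((Finset.range M).filter (incr Q)).card := by
  induction M with
  | zero => simp [scP]
  | succ m ih =>
    rw [Finset.range_add_one, Finset.filter_insert, scP, ih]
    by_cases h : incr Q m
    · rw [if_pos h, if_pos h, Finset.card_insert_of_notMem (by simp)]
    · rw [if_neg h, if_neg h, Nat.add_zero]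

lemma signChanges_eq_scP (Q : ℕ → Bs) (M : ℕ) (hvan : ∀ k, M ≤ k → Q k = zero) :
    signChanges Q = scP Q M := by
  classical
  set Pset : Set (ℕ × ℕ) := {p | p.1 < p.2 ∧ Q p.1 ≠ zero ∧ Q p.1 = sneg (Q p.2) ∧
      ∀ j, p.1 < j → j < p.2 → Q j = zero} with hPdef
  have hS : {i : ℕ | ∃ k, 1 ≤ k ∧ Q i ≠ zero ∧ Q i = sneg (Q (i + k)) ∧
      ∀ j, i < j → j < i + k → Q j = zero} = Prod.fst '' Pset := by
    ext i
    constructor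
    · rintro ⟨k, hk, h1, h2, h3⟩
      exact ⟨(i, i+k), ⟨by omega, h1, h2, h3⟩, rfl⟩
    · rintro ⟨⟨a, b⟩, ⟨hlt, h1, h2, h3⟩, rfl⟩
      refine ⟨b - a, by omega, h1, ?_, ?_⟩
      · have hab : a + (b - a) = b := by omega
        rw [hab]; exact h2
      · intro j hj1 hj2; exact h3 j hj1 (by omega)
  have hsnd : ∀ p ∈ Pset, Q p.2 ≠ zero := by
    rintro ⟨a, b⟩ ⟨hlt, h1, h2, h3⟩
    intro hb
    rw [hb] at h2
    exact h1 (by simpa [sneg] using h2)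
  have hinj1 : Set.InjOn Prod.fst Pset := by
    rintro ⟨a, b⟩ hab ⟨c, d⟩ hcd (h : a = c)
    subst h
    rcases lt_trichotomy b d with h | h | h
    · exact absurd (hcd.2.2.2 b hab.1 h) (hsnd _ hab)
    · rw [h]
    · exact absurd (hab.2.2.2 d hcd.1 h) (hsnd _ hcd)
  have hinj2 : Set.InjOn Prod.snd Pset := by
    rintro ⟨a, b⟩ hab ⟨c, d⟩ hcd (h : b = d)
    subst h
    rcases lt_trichotomy a c with h | h | h
    · exact absurd (hab.2.2.2 c h hcd.1) hcd.2.1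
    · rw [h]
    · exact absurd (hcd.2.2.2 a h hab.1) hab.2.1
  have hT : Prod.snd '' Pset = {j | incr Q j} := by
    ext j
    constructor
    · rintro ⟨⟨a, b⟩, hab, rfl⟩
      refine ⟨hsnd _ hab, ?_⟩
      rw [lastS_eq_of Q hab.1 hab.2.1 hab.2.2.2, hab.2.2.1]
    · rintro ⟨h1, h2⟩
      have hne : lastS Q j ≠ zero := by rw [h2]; exact sneg_ne_zero.2 h1
      obtain ⟨i, hi1, hi2, hi3⟩ := lastS_spec Q hne
      exact ⟨(i, j), ⟨hi1, by rw [hi2]; exact hne, by rw [hi2, h2], hi3⟩, rfl⟩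
  have hfin : {j | incr Q j} = ↑((Finset.range M).filter (incr Q)) := by
    ext j
    simp only [Finset.coe_filter, Finset.mem_range, Set.mem_setOf_eq]
    constructor
    · intro h
      refine ⟨?_, h⟩
      by_contra hc
      exact h.1 (hvan j (by omega))
    · exact fun h => h.2
  rw [signChanges, hS, Set.ncard_image_of_injOn hinj1,
    ← Set.ncard_image_of_injOn hinj2, hT, hfin, Set.ncard_coe_finset, scP_eq_card]

end Bs
namespace Bs

/-- value of the next nonzero coefficient within `(j, j+fuel]`. -/
def nxtA (Q : ℕ → Bs) : ℕ → ℕ → Bs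
  | 0, _ => zero
  | fuel+1, j => if Q (j+1) = zero then nxtA Q fuel (j+1) else Q (j+1)

/-- value of the next nonzero coefficient after `j` (degree bound `N`). -/
def nxtv (Q : ℕ → Bs) (N j : ℕ) : Bs := nxtA Q (N - j) j

lemma nxtv_ge (Q : ℕ → Bs) {N j : ℕ} (h : N ≤ j) : nxtv Q N j = zero := by
  rw [nxtv, Nat.sub_eq_zero_of_le h]; rfl

lemma nxtv_rec (Q : ℕ → Bs) {N : ℕ} (hdeg : ∀ k, N < k → Q k = zero) (j : ℕ) :
    nxtv Q N j = if Q (j+1) = zero then nxtv Q N (j+1) else Q (j+1) := by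
  rcases Nat.lt_or_ge j N with h | h
  · have : N - j = (N - (j+1)) + 1 := by omega
    rw [nxtv, this, nxtA, ← nxtv]
  · rw [nxtv_ge Q h, nxtv_ge Q (by omega), if_pos (hdeg (j+1) (by omega))]

lemma nxtA_signed (Q : ℕ → Bs) (h : ∀ k, isSigned (Q k)) :
    ∀ fuel j, isSigned (nxtA Q fuel j) := by
  intro fuel
  induction fuel with
  | zero => intro j; trivial
  | succ f ih => intro j; rw [nxtA]; split <;> [exact ih (j+1); exact h (j+1)]

lemma nxtv_signed (Q : ℕ → Bs) (h : ∀ k, isSigned (Q k)) (N j : ℕ) :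
    isSigned (nxtv Q N j) := nxtA_signed Q h _ j

lemma lsum_cons (x : Bs) (t : List Bs) : lsum (x :: t) = add x (lsum t) := rfl

lemma lsum_one {l : List Bs} (h : one ∈ l) : lsum l = one ∨ lsum l = bal := by
  induction l with
  | nil => simp at h
  | cons x t ih =>
    rw [List.mem_cons] at h
    rw [lsum_cons]
    rcases h with rfl | h
    · cases hy : lsum t <;> simp [add]
    · rcases ih h with h' | h' <;> rw [h'] <;> cases x <;> simp [add]

lemma lsum_negOne {l : List Bs} (h : negOne ∈ l) : lsum l = negOne ∨ lsum l = bal := by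
  induction l with
  | nil => simp at h
  | cons x t ih =>
    rw [List.mem_cons] at h
    rw [lsum_cons]
    rcases h with rfl | h
    · cases hy : lsum t <;> simp [add]
    · rcases ih h with h' | h' <;> rw [h'] <;> cases x <;> simp [add]

lemma spow_one (k : ℕ) : spow one k = one := by
  induction k with
  | zero => rfl
  | succ k ih => rw [spow, ih]; rfl

lemma mul_one_r (x : Bs) : mul x one = x := by cases x <;> rfl

lemma phat_one (Q : ℕ → Bs) (N : ℕ) :
    phat Q N one = lsum ((List.range (N + 1)).map Q) := by
  rw [phat]
  congr 1
  apply List.map_congr_left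
  intro k _
  rw [spow_one, mul_one_r]

lemma isRoot_one_of_both (Q : ℕ → Bs) (N : ℕ) (hvan : ∀ k, N < k → Q k = zero)
    {i j : ℕ} (hiN : i ≤ N) (hjN : j ≤ N) (hi : Q i = one) (hj : Q j = negOne) :
    IsRoot Q one := by
  refine ⟨N, hvan, ?_⟩
  have h1 : one ∈ (List.range (N + 1)).map Q := by
    rw [← hi]; exact List.mem_map_of_mem (f := Q) (List.mem_range.2 (by omega))
  have h2 : negOne ∈ (List.range (N + 1)).map Q := by
    rw [← hj]; exact List.mem_map_of_mem (f := Q) (List.mem_range.2 (by omega))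
  have hb : lsum ((List.range (N + 1)).map Q) = bal := by
    rcases lsum_one h1 with h | h
    · rcases lsum_negOne h2 with h' | h'
      · rw [h] at h'; exact absurd h' (by decide)
      · exact h'
    · exact h
  show isBalanced (add (phat Q N one) (sneg zero))
  rw [phat_one, hb]; trivial

end Bs
namespace Bs

def chi (a b : Bs) : ℕ := if a = b ∧ a ≠ zero then 1 else 0
def dlt (s x : Bs) : ℕ := if x ≠ zero ∧ s = sneg x then 1 else 0

lemma scP_zero (Q : ℕ → Bs) : scP Q 0 = 0 := rfl
lemma scP_succ (Q : ℕ → Bs) (m : ℕ) :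
    scP Q (m+1) = scP Q m + dlt (lastS Q m) (Q m) := by
  simp only [scP, incr, dlt]
  congr
lemma lastS_zero (Q : ℕ → Bs) : lastS Q 0 = zero := rfl
lemma lastS_succ (Q : ℕ → Bs) (m : ℕ) :
    lastS Q (m+1) = if Q m = zero then lastS Q m else Q m := rfl

lemma base_core : ∀ a b : Bs, isSigned a → isSigned b →
    nabla a (mul (sneg one) b) →
    (dlt zero b + chi (if a = zero then zero else a) (if b = zero then zero else b)
      ≤ dlt zero a
    ∧ ((if a = zero then zero else a) = zero → (if b = zero then zero else b) = zero)) := by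
  decide

lemma step_core : ∀ q r a b rm : Bs, isSigned q → isSigned r → isSigned a →
    isSigned b → isSigned rm → (rm ≠ zero → rm = r) → (q = zero → r = zero) →
    nabla a (add rm (mul (sneg one) b)) →
    (dlt r b + chi (if a = zero then q else a) (if b = zero then r else b)
      ≤ dlt q a + chi q r
    ∧ ((if a = zero then q else a) = zero → (if b = zero then r else b) = zero)) := by
  decide

lemma zero1_core : ∀ x : Bs, isSigned x → nabla x (mul (sneg one) zero) → x = zero := by
  decide
lemma zero2_core : ∀ x : Bs, isSigned x →
    nabla x (add zero (mul (sneg one) zero)) → x = zero := by decide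
lemma eq_core : ∀ x y : Bs, isSigned x → isSigned y →
    nabla x (add y (mul (sneg one) zero)) → x = y := by decide

/-- Key upper bound: dividing by `Y ⊖ 1` loses at least one sign change. -/
lemma keyub (Q R : ℕ → Bs) (hQ : ∀ k, isSigned (Q k)) (hR : ∀ k, isSigned (R k))
    (hc0 : nabla (Q 0) (mul (sneg one) (R 0)))
    (hck : ∀ k, 1 ≤ k → nabla (Q k) (add (R (k-1)) (mul (sneg one) (R k))))
    (hQne : ∃ j, Q j ≠ zero)
    (NR : ℕ) (hRvan : ∀ k, NR < k → R k = zero) :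
    ∃ M, (∀ k, M ≤ k → Q k = zero ∧ R k = zero) ∧ (∃ j, R j ≠ zero) ∧
      scP R M + 1 ≤ scP Q M := by
  have hckm : ∀ m : ℕ, nabla (Q (m+1)) (add (R m) (mul (sneg one) (R (m+1)))) := by
    intro m
    have h := hck (m+1) (by omega)
    simpa using h
  have hRne : ∃ j, R j ≠ zero := by
    by_contra hcon
    push_neg at hcon
    obtain ⟨j, hj⟩ := hQne
    apply hj
    cases j with
    | zero =>
      apply zero1_core _ (hQ 0)
      rw [← hcon 0]; exact hc0
    | succ m =>
      apply zero2_core _ (hQ (m+1))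
      have := hckm m
      rw [hcon m, hcon (m+1)] at this
      exact this
  -- invariant
  have inv : ∀ m, scP R (m+1) + chi (lastS Q (m+1)) (lastS R (m+1)) ≤ scP Q (m+1) ∧
      (lastS Q (m+1) = zero → lastS R (m+1) = zero) := by
    intro m
    induction m with
    | zero =>
      have hbc := base_core (Q 0) (R 0) (hQ 0) (hR 0) hc0
      simp only [scP_succ, scP_zero, lastS_succ, lastS_zero, Nat.zero_add]
      exact hbc
    | succ m ih =>
      obtain ⟨ih1, ih2⟩ := ih
      have hrm : R m ≠ zero → R m = lastS R (m+1) := fun h => by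
        rw [lastS_succ, if_neg h]
      obtain ⟨k1, k2⟩ := step_core (lastS Q (m+1)) (lastS R (m+1)) (Q (m+1)) (R (m+1))
        (R m) (lastS_signed Q hQ _) (lastS_signed R hR _) (hQ _) (hR _) (hR m)
        hrm ih2 (hckm m)
      have e1 : lastS Q (m+1+1) = if Q (m+1) = zero then lastS Q (m+1) else Q (m+1) :=
        lastS_succ Q (m+1)
      have e2 : lastS R (m+1+1) = if R (m+1) = zero then lastS R (m+1) else R (m+1) :=
        lastS_succ R (m+1)
      constructor
      · rw [scP_succ R (m+1), scP_succ Q (m+1), e1, e2]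
        omega
      · rw [e1, e2]; exact k2
  obtain ⟨j0, hj0⟩ := hRne
  have hj0NR : j0 ≤ NR := by
    by_contra h
    exact hj0 (hRvan j0 (by omega))
  set T := Nat.findGreatest (fun k => R k ≠ zero) NR with hTdef
  have hT : R T ≠ zero := Nat.findGreatest_spec (P := fun k => R k ≠ zero) hj0NR hj0
  have hTz : ∀ k, T < k → R k = zero := by
    intro k hk
    rcases le_or_gt k NR with h | h
    · by_contra hc
      exact Nat.findGreatest_is_greatest hk h hc
    · exact hRvan k h
  have hQT1 : Q (T+1) = R T := by
    apply eq_core _ _ (hQ _) (hR _)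
    have := hckm T
    rw [hTz (T+1) (by omega)] at this
    exact this
  have hQz : ∀ k, T + 2 ≤ k → Q k = zero := by
    intro k hk
    apply zero2_core _ (hQ k)
    obtain ⟨m, rfl⟩ : ∃ m, k = m + 1 := ⟨k - 1, by omega⟩
    have := hckm m
    rw [hTz m (by omega), hTz (m+1) (by omega)] at this
    exact this
  refine ⟨T + 2, fun k hk => ⟨hQz k hk, hTz k (by omega)⟩, ⟨j0, hj0⟩, ?_⟩
  have hQT1ne : Q (T+1) ≠ zero := by rw [hQT1]; exact hT
  have eQ : lastS Q (T+2) = R T := by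
    rw [lastS_succ, if_neg hQT1ne, hQT1]
  have eR : lastS R (T+2) = R T := by
    rw [lastS_succ, if_pos (hTz (T+1) (by omega)), lastS_succ, if_neg hT]
  have := (inv (T+1)).1
  rw [show T+1+1 = T+2 from rfl] at this
  rw [eQ, eR] at this
  have hchi : chi (R T) (R T) = 1 := by
    rw [chi, if_pos ⟨rfl, hT⟩]
  omega

end Bs
namespace Bs

lemma mul_signed : ∀ l x : Bs, isSigned l → isSigned x → isSigned (mul l x) := by decide
lemma mul_eq_zero_iff : ∀ l x : Bs, isSigned l → l ≠ zero → (mul l x = zero ↔ x = zero) := by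
  decide

lemma lastS_smul (l : Bs) (hl1 : isSigned l) (hl2 : l ≠ zero) (Q : ℕ → Bs) (m : ℕ) :
    lastS (fun k => mul l (Q k)) m = mul l (lastS Q m) := by
  induction m with
  | zero => cases l <;> rfl
  | succ m ih =>
    rw [lastS_succ, lastS_succ, ih]
    by_cases h : Q m = zero
    · rw [if_pos h, if_pos ((mul_eq_zero_iff l (Q m) hl1 hl2).2 h)]
    · rw [if_neg h, if_neg (fun hc => h ((mul_eq_zero_iff l (Q m) hl1 hl2).1 hc))]

lemma dlt_smul : ∀ l s x : Bs, isSigned l → l ≠ zero →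
    dlt (mul l s) (mul l x) = dlt s x := by decide

lemma scP_smul (l : Bs) (hl1 : isSigned l) (hl2 : l ≠ zero) (Q : ℕ → Bs) (M : ℕ) :
    scP (fun k => mul l (Q k)) M = scP Q M := by
  induction M with
  | zero => rfl
  | succ m ih =>
    rw [scP_succ, scP_succ, ih, lastS_smul l hl1 hl2, dlt_smul l _ _ hl1 hl2]

lemma upper : ∀ m (Q : ℕ → Bs), (∀ k, isSigned (Q k)) →
    (∃ N, ∀ k, N < k → Q k = zero) → (∃ j, Q j ≠ zero) →
    MultGe one m Q → m ≤ signChanges Q := by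
  intro m
  induction m with
  | zero => intros; omega
  | succ m ih =>
    rintro Q hQs ⟨NQ, hNQ⟩ hQne hmg
    obtain ⟨hroot, lam, R, hl1, hl2, hRs, ⟨NR, hNR⟩, ⟨hbf1, hbf0⟩, hmlt⟩ := hmg
    have hQ's : ∀ k, isSigned (mul lam (Q k)) := fun k => mul_signed lam (Q k) hl1 (hQs k)
    have hQ'ne : ∃ j, mul lam (Q j) ≠ zero := by
      obtain ⟨j, hj⟩ := hQne
      exact ⟨j, fun h => hj ((mul_eq_zero_iff lam (Q j) hl1 hl2).1 h)⟩
    obtain ⟨M, hvan, hRne, hineq⟩ :=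
      keyub (fun k => mul lam (Q k)) R hQ's hRs hbf0 hbf1 hQ'ne NR hNR
    have hQvan : ∀ k, M ≤ k → Q k = zero := fun k hk =>
      (mul_eq_zero_iff lam (Q k) hl1 hl2).1 (hvan k hk).1
    have e1 : signChanges Q = scP Q M := signChanges_eq_scP Q M hQvan
    have e2 : signChanges R = scP R M := signChanges_eq_scP R M (fun k hk => (hvan k hk).2)
    have e3 : scP (fun k => mul lam (Q k)) M = scP Q M := scP_smul lam hl1 hl2 Q M
    have hm : m ≤ signChanges R := ih R hRs ⟨NR, hNR⟩ hRne hmlt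
    omega

end Bs
namespace Bs

lemma sneg_sneg : ∀ x : Bs, sneg (sneg x) = x := by decide
lemma sneg_signed : ∀ x : Bs, isSigned x → isSigned (sneg x) := by decide
lemma mul_one_l : ∀ x : Bs, mul one x = x := by decide

lemma scP_eq_zero_of (Q : ℕ → Bs) (M : ℕ) (h : ∀ i, i < M → ¬ incr Q i) :
    scP Q M = 0 := by
  induction M with
  | zero => rfl
  | succ m ih =>
    rw [scP, if_neg (h m (by omega)), ih (fun i hi => h i (by omega))]

lemma exists_incr_of_scP_pos (Q : ℕ → Bs) (M : ℕ) (h : 1 ≤ scP Q M) :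
    ∃ i, incr Q i := by
  by_contra hc
  push_neg at hc
  rw [scP_eq_zero_of Q M (fun i _ => hc i)] at h
  omega

lemma c0_core : ∀ a : Bs, isSigned a →
    nabla a (mul (sneg one) (sneg (if a = zero then zero else a))) := by decide
lemma cA_core : ∀ a l : Bs, isSigned a → isSigned l →
    nabla a (add (sneg l) (mul (sneg one) (sneg (if a = zero then l else a)))) := by decide
lemma cB_core : ∀ a v : Bs, a ≠ zero →
    nabla a (add (sneg (sneg a)) (mul (sneg one) v)) := by decide
lemma cC_core : ∀ a v : Bs,
    nabla a (add (if a = zero then v else a) (mul (sneg one) v)) := by decide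

lemma p1_core : ∀ a l : Bs, isSigned a → isSigned l → ¬(a ≠ zero ∧ l = sneg a) →
    (dlt (sneg l) (sneg (if a = zero then l else a)) = 0 ∧
     (if sneg (if a = zero then l else a) = zero then sneg l
      else sneg (if a = zero then l else a)) = sneg (if a = zero then l else a)) := by decide

lemma base2_core : ∀ c v : Bs, isSigned c → isSigned v → c ≠ zero →
    dlt c v + 1 = 1 + (if (if v = zero then c else v) = c then 0 else 1) := by decide

lemma step2_core : ∀ lq a v : Bs, isSigned lq → isSigned a → isSigned v → lq ≠ zero →
    ((if (if (if a = zero then v else a) = zero then lq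
          else (if a = zero then v else a)) = lq then 0 else 1)
      + dlt (if (if a = zero then v else a) = zero then lq
          else (if a = zero then v else a)) v
     = dlt lq a
      + (if (if v = zero then (if (if a = zero then v else a) = zero then lq
              else (if a = zero then v else a)) else v) = (if a = zero then lq else a)
          then 0 else 1))
    ∧ ((if v = zero then (if (if a = zero then v else a) = zero then lq
          else (if a = zero then v else a)) else v)
        = (if v = zero then (if a = zero then lq else a) else v))
    ∧ (if a = zero then lq else a) ≠ zero := by decide

lemma lower : ∀ m (Q : ℕ → Bs), (∀ k, isSigned (Q k)) →
    (∃ N, ∀ k, N < k → Q k = zero) → m ≤ signChanges Q → MultGe one m Q := by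
  intro m
  induction m with
  | zero => intros; trivial
  | succ m ih =>
    rintro Q hQs ⟨N, hN⟩ hm
    have hQvan : ∀ k, N + 2 ≤ k → Q k = zero := fun k hk => hN k (by omega)
    have e0 : signChanges Q = scP Q (N+2) := signChanges_eq_scP Q (N+2) hQvan
    have hex : ∃ i, incr Q i := exists_incr_of_scP_pos Q (N+2) (by omega)
    set i₂ := Nat.find hex with hi2def
    have hinc : incr Q i₂ := Nat.find_spec hex
    have hmin : ∀ j, j < i₂ → ¬ incr Q j := fun j hj => Nat.find_min hex hj
    obtain ⟨hQi2, hLi2⟩ := hinc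
    have hi2N : i₂ ≤ N := by
      by_contra h
      exact hQi2 (hN i₂ (by omega))
    have hLne0 : lastS Q i₂ ≠ zero := by
      rw [hLi2]; exact sneg_ne_zero.2 hQi2
    have hi2pos : 1 ≤ i₂ := by
      by_contra h
      have h0 : i₂ = 0 := by omega
      rw [h0, lastS_zero] at hLne0
      exact hLne0 rfl
    -- the quotient polynomial
    set R : ℕ → Bs := fun j => if j < i₂ then sneg (lastS Q (j+1)) else nxtv Q N j
      with hRdef
    have hRs : ∀ k, isSigned (R k) := by
      intro k
      rw [hRdef]
      dsimp only
      split
      · exact sneg_signed _ (lastS_signed Q hQs _)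
      · exact nxtv_signed Q hQs N k
    have hRvan : ∀ k, N ≤ k → R k = zero := by
      intro k hk
      rw [hRdef]
      dsimp only
      rw [if_neg (by omega), nxtv_ge Q hk]
    -- balFactor
    have hbf0 : nabla (mul one (Q 0)) (mul (sneg one) (R 0)) := by
      rw [mul_one_l, hRdef]
      dsimp only
      rw [if_pos (by omega), lastS_succ, lastS_zero]
      exact c0_core (Q 0) (hQs 0)
    have hbf1 : ∀ k, 1 ≤ k →
        nabla (mul one (Q k)) (add (R (k-1)) (mul (sneg one) (R k))) := by
      intro k hk
      obtain ⟨j, rfl⟩ : ∃ j, k = j + 1 := ⟨k - 1, by omega⟩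
      rw [mul_one_l]
      have hj1 : j + 1 - 1 = j := by omega
      rw [hj1, hRdef]
      dsimp only
      rcases lt_trichotomy (j+1) i₂ with h | h | h
      · rw [if_pos (by omega), if_pos h, lastS_succ Q (j+1)]
        exact cA_core (Q (j+1)) (lastS Q (j+1)) (hQs _) (lastS_signed Q hQs _)
      · rw [if_pos (by omega), if_neg (by omega)]
        have e1 : lastS Q (j+1) = sneg (Q (j+1)) := by rw [h]; exact hLi2
        have e2 : Q (j+1) ≠ zero := by rw [h]; exact hQi2
        rw [e1]
        exact cB_core (Q (j+1)) _ e2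
      · rw [if_neg (by omega), if_neg (by omega)]
        have hrec := nxtv_rec Q hN j
        rw [hrec]
        by_cases hq : Q (j+1) = zero
        · rw [if_pos hq]
          have := cC_core (Q (j+1)) (nxtv Q N (j+1))
          rw [if_pos hq] at this
          exact this
        · rw [if_neg hq]
          have := cC_core (Q (j+1)) (nxtv Q N (j+1))
          rw [if_neg hq] at this
          exact this
    -- phase 1 count
    have phase1 : ∀ m', m' ≤ i₂ → scP R m' = 0 ∧ lastS R m' = sneg (lastS Q m') := by
      intro m'
      induction m' with
      | zero => intro _; exact ⟨rfl, rfl⟩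
      | succ m' ihp =>
        intro hle
        obtain ⟨ih1, ih2⟩ := ihp (by omega)
        have hRm : R m' = sneg (lastS Q (m'+1)) := by
          rw [hRdef]; dsimp only; rw [if_pos (by omega)]
        obtain ⟨pc1, pc2⟩ := p1_core (Q m') (lastS Q m') (hQs _) (lastS_signed Q hQs _)
          (hmin m' (by omega))
        constructor
        · rw [scP_succ, ih1, ih2, hRm, lastS_succ Q m', pc1]
        · rw [lastS_succ R m', hRm, ih2, lastS_succ Q m']
          exact pc2
    obtain ⟨h10, h1L⟩ := phase1 i₂ le_rfl
    have hlsQ : lastS Q (i₂+1) = Q i₂ := by rw [lastS_succ, if_neg hQi2]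
    have hscQ : scP Q (i₂+1) = 1 := by
      rw [scP_succ, scP_eq_zero_of Q i₂ hmin, hLi2, dlt, if_pos ⟨hQi2, rfl⟩]
    have hRi2 : R i₂ = nxtv Q N i₂ := by
      rw [hRdef]; dsimp only; rw [if_neg (by omega)]
    have h1L' : lastS R i₂ = Q i₂ := by rw [h1L, hLi2, sneg_sneg]
    -- phase 2 invariant
    have phase2 : ∀ m', i₂ + 1 ≤ m' →
        (scP R m' + 1 = scP Q m' + (if lastS R m' = lastS Q m' then 0 else 1)
        ∧ lastS R m' = (if nxtv Q N (m'-1) = zero then lastS Q m' else nxtv Q N (m'-1))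
        ∧ lastS Q m' ≠ zero) := by
      intro m' hm'
      induction m', hm' using Nat.le_induction with
      | base =>
        have hsub : i₂ + 1 - 1 = i₂ := by omega
        rw [hsub, hlsQ]
        have hlsR : lastS R (i₂+1) =
            if nxtv Q N i₂ = zero then Q i₂ else nxtv Q N i₂ := by
          rw [lastS_succ, hRi2, h1L']
        refine ⟨?_, hlsR, hQi2⟩
        rw [hscQ, scP_succ, h10, h1L', hRi2, Nat.zero_add, hlsR]
        exact base2_core (Q i₂) (nxtv Q N i₂) (hQs _) (nxtv_signed Q hQs N i₂) hQi2
      | succ m' hm' ihp =>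
        obtain ⟨k1, k2, k3⟩ := ihp
        have hsub : m' + 1 - 1 = m' := by omega
        have hrec : nxtv Q N (m'-1) = if Q m' = zero then nxtv Q N m' else Q m' := by
          have := nxtv_rec Q hN (m'-1)
          rw [show m' - 1 + 1 = m' from by omega] at this
          exact this
        rw [hrec] at k2
        have hRm : R m' = nxtv Q N m' := by
          rw [hRdef]; dsimp only; rw [if_neg (by omega)]
        obtain ⟨s1, s2, s3⟩ := step2_core (lastS Q m') (Q m') (nxtv Q N m')
          (lastS_signed Q hQs _) (hQs _) (nxtv_signed Q hQs N m') k3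
        rw [← k2] at s1 s2
        refine ⟨?_, ?_, ?_⟩
        · rw [scP_succ R m', scP_succ Q m', lastS_succ R m', lastS_succ Q m', hRm]
          omega
        · rw [hsub, lastS_succ R m', lastS_succ Q m', hRm]
          exact s2
        · rw [lastS_succ Q m']
          exact s3
    -- conclusion of the count
    obtain ⟨f1, f2, f3⟩ := phase2 (N+2) (by omega)
    have hnx : nxtv Q N (N+2-1) = zero := nxtv_ge Q (by omega)
    rw [hnx, if_pos rfl] at f2
    rw [f2, if_pos rfl] at f1
    -- signChanges R
    have hRvan' : ∀ k, N + 2 ≤ k → R k = zero := fun k hk => hRvan k (by omega)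
    have eR : signChanges R = scP R (N+2) := signChanges_eq_scP R (N+2) hRvan'
    -- IsRoot
    have hroot : IsRoot Q one := by
      have hLne : lastS Q i₂ ≠ zero := by
        rw [hLi2]; exact sneg_ne_zero.2 hQi2
      obtain ⟨i, hi1, hi2, _⟩ := lastS_spec Q hLne
      have hiQ : Q i = sneg (Q i₂) := by rw [hi2, hLi2]
      have hiN : i ≤ N := by omega
      cases hc : Q i₂ with
      | zero => exact absurd hc hQi2
      | bal => exact absurd (hQs i₂) (by rw [hc]; exact id)
      | one =>
        have hne : Q i = negOne := by rw [hiQ, hc]; rfl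
        exact isRoot_one_of_both Q N hN hi2N hiN hc hne
      | negOne =>
        have hone : Q i = one := by rw [hiQ, hc]; rfl
        exact isRoot_one_of_both Q N hN hiN hi2N hone hc
    refine ⟨hroot, one, R, trivial, by decide, hRs, ⟨N, fun k hk => hRvan k (by omega)⟩,
      ⟨hbf1, hbf0⟩, ih R hRs ⟨N, fun k hk => hRvan k (by omega)⟩ (by omega)⟩

end Bs
namespace Bs

lemma multEq_one (Q : ℕ → Bs) (n : ℕ) (hQn : Q n ≠ zero)
    (hdeg : ∀ k, n < k → Q k = zero) (hs : ∀ k, isSigned (Q k)) :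
    MultEq one Q (signChanges Q) := by
  constructor
  · exact lower (signChanges Q) Q hs ⟨n, hdeg⟩ le_rfl
  · intro h
    have := upper (signChanges Q + 1) Q hs ⟨n, hdeg⟩ ⟨n, hQn⟩ h
    omega

/-- the substitution `Y ↦ ⊖Y` on coefficients. -/
def tw (Q : ℕ → Bs) : ℕ → Bs := fun i => if Even i then Q i else sneg (Q i)

lemma sneg_eq_zero : ∀ x : Bs, sneg x = zero ↔ x = zero := by decide
lemma mul_negOne_r : ∀ x : Bs, mul x negOne = sneg x := by decide

lemma tw_zero (Q : ℕ → Bs) (k : ℕ) : tw Q k = zero ↔ Q k = zero := by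
  rw [tw]
  by_cases h : Even k
  · rw [if_pos h]
  · rw [if_neg h]; exact sneg_eq_zero _

lemma tw_signed (Q : ℕ → Bs) (hs : ∀ k, isSigned (Q k)) (k : ℕ) :
    isSigned (tw Q k) := by
  rw [tw]
  by_cases h : Even k
  · rw [if_pos h]; exact hs k
  · rw [if_neg h]; exact sneg_signed _ (hs k)

lemma tw_tw (Q : ℕ → Bs) : tw (tw Q) = Q := by
  funext i
  rw [tw, tw]
  by_cases h : Even i
  · rw [if_pos h, if_pos h]
  · rw [if_neg h, if_neg h, sneg_sneg]

lemma spow_negOne (k : ℕ) : spow negOne k = if Even k then one else negOne := by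
  induction k with
  | zero => rw [if_pos Even.zero]; rfl
  | succ k ih =>
    rw [spow, ih]
    by_cases h : Even k
    · rw [if_pos h, if_neg (by rw [Nat.even_add_one]; exact fun hc => hc h)]; rfl
    · rw [if_neg h, if_pos (Nat.even_add_one.2 h)]; rfl

lemma phat_tw (P : ℕ → Bs) (N : ℕ) : phat (tw P) N one = phat P N negOne := by
  rw [phat, phat]
  congr 1
  apply List.map_congr_left
  intro k _
  rw [spow_one, mul_one_r, spow_negOne, tw]
  by_cases h : Even k
  · rw [if_pos h, if_pos h, mul_one_r]
  · rw [if_neg h, if_neg h, mul_negOne_r]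

lemma root_tw (P : ℕ → Bs) : IsRoot P negOne ↔ IsRoot (tw P) one := by
  constructor
  · rintro ⟨N, h1, h2⟩
    exact ⟨N, fun k hk => (tw_zero P k).2 (h1 k hk), by rw [phat_tw]; exact h2⟩
  · rintro ⟨N, h1, h2⟩
    exact ⟨N, fun k hk => (tw_zero P k).1 (h1 k hk), by rw [← phat_tw]; exact h2⟩

lemma bfk_even : ∀ l p r' r : Bs,
    nabla (mul l p) (add r' (mul (sneg negOne) r)) ↔
    nabla (mul (sneg l) p) (add (sneg r') (mul (sneg one) r)) := by decide
lemma bfk_odd : ∀ l p r' r : Bs,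
    nabla (mul l p) (add r' (mul (sneg negOne) r)) ↔
    nabla (mul (sneg l) (sneg p)) (add r' (mul (sneg one) (sneg r))) := by decide
lemma bf0_core : ∀ l p r : Bs,
    nabla (mul l p) (mul (sneg negOne) r) ↔
    nabla (mul (sneg l) p) (mul (sneg one) r) := by decide

lemma bf_tw (lam : Bs) (P R : ℕ → Bs) :
    balFactor negOne lam P R ↔ balFactor one (sneg lam) (tw P) (tw R) := by
  apply and_congr
  · apply forall_congr'
    intro k
    apply imp_congr_right
    intro hk
    obtain ⟨j, rfl⟩ : ∃ j, k = j + 1 := ⟨k - 1, by omega⟩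
    have hsub : j + 1 - 1 = j := by omega
    rw [hsub, tw, tw, tw]
    by_cases h : Even (j+1)
    · have hj : ¬ Even j := fun hc => (Nat.even_add_one.1 h) hc
      rw [if_pos h, if_pos h, if_neg hj]
      exact bfk_even lam (P (j+1)) (R j) (R (j+1))
    · have hj : Even j := by
        by_contra hc
        exact h (Nat.even_add_one.2 hc)
      rw [if_neg h, if_neg h, if_pos hj]
      exact bfk_odd lam (P (j+1)) (R j) (R (j+1))
  · rw [tw, tw, if_pos (Even.zero)]
    exact bf0_core lam (P 0) (R 0)

lemma multGe_tw : ∀ (m : ℕ) (P : ℕ → Bs), MultGe negOne m P ↔ MultGe one m (tw P) := by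
  intro m
  induction m with
  | zero => intro P; exact Iff.rfl
  | succ m ihm =>
    intro P
    constructor
    · rintro ⟨hr, lam, R, h1, h2, h3, ⟨N, h4⟩, h5, h6⟩
      exact ⟨(root_tw P).1 hr, sneg lam, tw R, sneg_signed lam h1,
        fun hc => h2 ((sneg_eq_zero lam).1 hc), tw_signed R h3,
        ⟨N, fun k hk => (tw_zero R k).2 (h4 k hk)⟩, (bf_tw lam P R).1 h5,
        (ihm R).1 h6⟩
    · rintro ⟨hr, lam, S, h1, h2, h3, ⟨N, h4⟩, h5, h6⟩
      refine ⟨(root_tw P).2 hr, sneg lam, tw S, sneg_signed lam h1,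
        fun hc => h2 ((sneg_eq_zero lam).1 hc), tw_signed S h3,
        ⟨N, fun k hk => (tw_zero S k).2 (h4 k hk)⟩, ?_, ?_⟩
      · apply (bf_tw (sneg lam) P (tw S)).2
        rw [sneg_sneg, tw_tw]
        exact h5
      · apply (ihm (tw S)).2
        rw [tw_tw]
        exact h6

end Bs



/-- Baker–Lorscheid (Descartes for the hyperfield of signs): for a formal
polynomial `Q` of degree `n` over `B_s` with signed coefficients, the
multiplicity of the root `𝟙` equals the number of sign changes in its nonzero
coefficients, and the multiplicity of the root `⊖𝟙` equals the number of sign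
changes in the coefficients of `Q(⊖Y)`. -/
theorem bs_multiplicity_eq_sign_changes (Q : ℕ → Bs) (n : ℕ)
    (hQn : Q n ≠ Bs.zero) (hdeg : ∀ k, n < k → Q k = Bs.zero)
    (hsigned : ∀ k, Bs.isSigned (Q k)) :
    Bs.MultEq Bs.one Q (Bs.signChanges Q) ∧
    Bs.MultEq Bs.negOne Q
      (Bs.signChanges fun i => if Even i then Q i else Bs.sneg (Q i)) := by
  constructor
  · exact Bs.multEq_one Q n hQn hdeg hsigned
  · have e : (fun i => if Even i then Q i else Bs.sneg (Q i)) = Bs.tw Q := rfl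
    rw [e]
    have h1 : Bs.MultEq Bs.one (Bs.tw Q) (Bs.signChanges (Bs.tw Q)) :=
      Bs.multEq_one (Bs.tw Q) n (fun h => hQn ((Bs.tw_zero Q n).1 h))
        (fun k hk => (Bs.tw_zero Q k).2 (hdeg k hk)) (Bs.tw_signed Q hsigned)
    exact ⟨(Bs.multGe_tw _ Q).2 h1.1, fun hc => h1.2 ((Bs.multGe_tw _ Q).1 hc)⟩
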